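/- Let n be odd and suppose the stochastic map c : {0,1}ⁿ → {0,1} computes the majority function with advantage γ, i.e. P[c(x) = Maj_n(x)] ≥ 1/2 + γ for all x. Then A_c'(1/2) ≥ (nγ/2ⁿ) · C(n-1, (n-1)/2). -/

import Mathlib

/-- Hamming weight of a boolean string. -/
def hw {n : ℕ} (x : Fin n → Bool) : ℕ := (Finset.univ.filter fun i => x i = true).card

/-- Amplification function of a stochastic map `c : {0,1}ⁿ → {0,1}` given by the
probabilities `q x = P[c(x) = 1]`. -/
noncomputable def ampF (n : ℕ) (q : (Fin n → Bool) → ℝ) (p : ℝ) : ℝ :=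
  ∑ x : Fin n → Bool, p ^ hw x * (1 - p) ^ (n - hw x) * q x

namespace Stmt3Aux

def setToStr {n : ℕ} : Finset (Fin n) ≃ (Fin n → Bool) where
  toFun := fun s i => decide (i ∈ s)
  invFun := fun x => Finset.univ.filter fun i => x i = true
  left_inv := by intro s; ext i; simp
  right_inv := by
    intro x; funext i; simp only [Finset.mem_filter, Finset.mem_univ, true_and]
    cases h : x i <;> simp [h]

lemma hw_setToStr {n : ℕ} (s : Finset (Fin n)) : hw (setToStr s) = s.card := by
  unfold hw setToStr
  simp

/-- Sum over boolean strings as sum over weights. -/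
lemma sum_hw {n : ℕ} (f : ℕ → ℝ) :
    ∑ x : Fin n → Bool, f (hw x) = ∑ k ∈ Finset.range (n+1), (n.choose k : ℝ) * f k := by
  have h1 : ∑ x : Fin n → Bool, f (hw x) = ∑ s : Finset (Fin n), f s.card := by
    rw [← Equiv.sum_comp (setToStr (n := n)) (fun x => f (hw x))]
    exact Finset.sum_congr rfl fun s _ => by rw [hw_setToStr]
  rw [h1, ← Finset.powerset_univ, Finset.sum_powerset_apply_card]
  simp [Finset.card_univ, mul_comm]

lemma term_id (m i : ℕ) :
    ((2*(m+1+i) : ℝ) - (2*m+1)) * ((2*m+1).choose (m+1+i)) =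
      (2*m+1) * ((2*m).choose (m+i)) - (2*m+1) * ((2*m).choose (m+i+1)) := by
  have A : (m+1+i) * ((2*m+1).choose (m+1+i)) = (2*m+1) * ((2*m).choose (m+i)) := by
    have h := Nat.add_one_mul_choose_eq (2*m) (m+i)
    rw [show m+1+i = m+i+1 from by omega, mul_comm]
    exact h.symm
  have P : (2*m+1).choose (m+1+i) = (2*m).choose (m+i) + (2*m).choose (m+i+1) := by
    have h := Nat.choose_succ_succ' (2*m) (m+i)
    rw [show m+1+i = m+i+1 from by omega]
    exact h
  have A' : ((m:ℝ)+1+i) * ((2*m+1).choose (m+1+i)) = (2*m+1) * ((2*m).choose (m+i)) := by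
    exact_mod_cast congrArg (Nat.cast : ℕ → ℝ) A
  have P' : (((2*m+1).choose (m+1+i) : ℝ)) = (2*m).choose (m+i) + (2*m).choose (m+i+1) := by
    exact_mod_cast congrArg (Nat.cast : ℕ → ℝ) P
  nlinarith [A', P']

lemma sum_pos_part (m : ℕ) :
    ∑ k ∈ Finset.Ico (m+1) (2*m+2), ((2*k : ℝ) - (2*m+1)) * ((2*m+1).choose k) =
      (2*m+1) * ((2*m).choose m) := by
  rw [Finset.sum_Ico_eq_sum_range]
  have h : 2*m+2 - (m+1) = m+1 := by omega
  rw [h]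
  have tel := Finset.sum_range_sub' (fun i => ((2*m+1 : ℝ)) * ((2*m).choose (m+i))) (m+1)
  trans ((2*m+1 : ℝ) * ((2*m).choose (m+0)) - (2*m+1 : ℝ) * ((2*m).choose (m+(m+1))))
  · rw [← tel]
    refine Finset.sum_congr rfl fun i _ => ?_
    have t := term_id m i
    rw [show m+(i+1) = m+i+1 from by omega]
    push_cast at t ⊢
    linarith [t]
  · rw [Nat.choose_eq_zero_of_lt (by omega : 2*m < m+(m+1))]
    simp

lemma hw_le {n : ℕ} (x : Fin n → Bool) : hw x ≤ n := by
  have := Finset.card_filter_le (Finset.univ : Finset (Fin n)) (fun i => x i = true)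
  simpa [hw] using this

lemma pow_shift (a b n : ℕ) (h : a + b = n) :
    (a:ℝ)*((1:ℝ)/2)^(a-1)*((1:ℝ)/2)^b = a*((1:ℝ)/2)^(n-1) := by
  cases a with
  | zero => simp
  | succ a' =>
      have h2 : a' + b = n - 1 := by omega
      rw [Nat.add_sub_cancel, mul_assoc, ← pow_add, h2]

lemma deriv_term {n : ℕ} (q : (Fin n → Bool) → ℝ) (x : Fin n → Bool) :
    HasDerivAt (fun p : ℝ => p ^ hw x * (1-p) ^ (n - hw x) * q x)
      ((2*(hw x : ℝ) - n) * ((1:ℝ)/2)^(n-1) * q x) (1/2) := by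
  have h1 : HasDerivAt (fun p:ℝ => p ^ hw x) ((hw x : ℝ) * (1/2:ℝ)^(hw x - 1)) (1/2) :=
    hasDerivAt_pow _ _
  have hi : HasDerivAt (fun p:ℝ => 1 - p) (-1) (1/2) := (hasDerivAt_id (1/2:ℝ)).const_sub 1
  have h2 : HasDerivAt (fun p:ℝ => (1-p) ^ (n - hw x))
      (((n - hw x : ℕ) : ℝ) * ((1:ℝ) - 1/2)^(n - hw x - 1) * (-1)) (1/2) :=
    (hasDerivAt_pow (n - hw x) ((1:ℝ) - 1/2)).comp _ hi
  have h := (h1.mul h2).mul_const (q x)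
  have ha : hw x ≤ n := hw_le x
  have hcast : ((n - hw x : ℕ) : ℝ) = (n : ℝ) - hw x := by
    rw [Nat.cast_sub ha]
  have f1 := pow_shift (hw x) (n - hw x) n (by omega)
  have f2 := pow_shift (n - hw x) (hw x) n (by omega)
  have e : ((hw x : ℝ) * (1/2:ℝ)^(hw x - 1) * ((1:ℝ) - 1/2)^(n - hw x)
      + (1/2:ℝ)^(hw x) * (((n - hw x : ℕ) : ℝ) * ((1:ℝ) - 1/2)^(n - hw x - 1) * (-1))) * q x
      = (2*(hw x : ℝ) - n) * ((1:ℝ)/2)^(n-1) * q x := by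
    rw [show ((1:ℝ) - 1/2) = 1/2 by norm_num]
    rw [hcast] at f2 ⊢
    linear_combination q x * f1 - q x * f2
  exact e ▸ h

/-- The sum of (2k - n) over all strings vanishes. -/
lemma sum_t_zero (n : ℕ) :
    ∑ x : Fin n → Bool, (2*(hw x : ℝ) - n) = 0 := by
  rw [sum_hw (fun k => 2*(k:ℝ) - n)]
  have hrefl := Finset.sum_range_reflect (fun k => (n.choose k : ℝ) * (2*(k:ℝ) - n)) (n+1)
  have key : ∀ j ∈ Finset.range (n+1),
      (n.choose (n+1-1-j) : ℝ) * (2*((n+1-1-j : ℕ):ℝ) - n)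
        = -((n.choose j : ℝ) * (2*(j:ℝ) - n)) := by
    intro j hj
    rw [Finset.mem_range] at hj
    have hjn : j ≤ n := by omega
    rw [show n+1-1-j = n-j from by omega, Nat.choose_symm hjn, Nat.cast_sub hjn]
    ring
  rw [Finset.sum_congr rfl key] at hrefl
  rw [Finset.sum_neg_distrib] at hrefl
  linarith [hrefl]

end Stmt3Aux

open Stmt3Aux in
theorem stmt3 (n : ℕ) (hn : Odd n) (γ : ℝ) (hγ : 0 < γ)
    (q : (Fin n → Bool) → ℝ) (hq : ∀ x, q x ∈ Set.Icc (0:ℝ) 1)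
    (hmaj : ∀ x : Fin n → Bool,
      (if (n : ℝ) / 2 < (hw x : ℝ) then q x else 1 - q x) ≥ 1/2 + γ) :
    (n : ℝ) * γ / 2 ^ n * (Nat.choose (n-1) ((n-1)/2)) ≤ deriv (ampF n q) (1/2) := by
  obtain ⟨m, hm⟩ := hn
  subst hm
  -- derivative
  have hD : HasDerivAt (ampF (2*m+1) q)
      (∑ x : Fin (2*m+1) → Bool, (2*(hw x : ℝ) - ((2*m+1 : ℕ) : ℝ)) * ((1:ℝ)/2)^(2*m+1-1) * q x) (1/2) := by
    unfold ampF
    exact HasDerivAt.fun_sum (fun x _ => deriv_term q x)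
  rw [hD.deriv]
  -- simplify the binomial in the goal
  rw [show (2*m+1-1) = 2*m from rfl, show (2*m)/2 = m from by omega]
  rw [show ((2*m+1 : ℕ) : ℝ) = 2*(m:ℝ)+1 from by push_cast; ring]
  -- per-term lower bound
  have per : ∀ x : Fin (2*m+1) → Bool,
      (2*(hw x : ℝ) - (2*m+1))/2 + γ * |2*(hw x : ℝ) - (2*m+1)|
        ≤ (2*(hw x : ℝ) - (2*m+1)) * q x := by
    intro x
    have hmx := hmaj x
    obtain ⟨hq0, hq1⟩ := hq x
    by_cases hc : ((2*m+1 : ℕ) : ℝ) / 2 < (hw x : ℝ)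
    · rw [if_pos hc] at hmx
      have ht : (0:ℝ) < 2*(hw x : ℝ) - (2*m+1) := by push_cast at hc ⊢; linarith
      rw [abs_of_pos ht]
      nlinarith
    · rw [if_neg hc] at hmx
      have hwm : hw x ≤ m := by
        by_contra hcon
        push_neg at hcon
        apply hc
        push_cast
        have : (m:ℝ) + 1 ≤ hw x := by exact_mod_cast hcon
        linarith
      have ht : 2*(hw x : ℝ) - (2*m+1) ≤ -1 := by
        have : (hw x : ℝ) ≤ m := by exact_mod_cast hwm
        push_cast
        linarith
      rw [abs_of_neg (by linarith)]
      nlinarith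
  -- sum of absolute values lower bound
  have habs : ((2*m+1 : ℝ)) * ((2*m).choose m)
      ≤ ∑ x : Fin (2*m+1) → Bool, |2*(hw x : ℝ) - (2*m+1)| := by
    rw [sum_hw (fun k => |2*(k:ℝ) - (2*m+1)|)]
    rw [← sum_pos_part m]
    have hsub : Finset.Ico (m+1) (2*m+2) ⊆ Finset.range (2*m+1+1) := by
      intro k hk
      rw [Finset.mem_Ico] at hk
      rw [Finset.mem_range]
      omega
    have := Finset.sum_le_sum_of_subset_of_nonneg hsub
      (f := fun k => ((2*m+1).choose k : ℝ) * |2*(k:ℝ) - (2*m+1)|)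
      (fun k _ _ => by positivity)
    refine le_trans ?_ this
    apply le_of_eq
    refine Finset.sum_congr rfl fun k hk => ?_
    rw [Finset.mem_Ico] at hk
    have : (0:ℝ) < 2*(k:ℝ) - (2*m+1) := by
      have : (m:ℝ) + 1 ≤ k := by exact_mod_cast hk.1
      push_cast
      linarith
    simp only [abs_of_pos this]
    push_cast
    ring
  -- sum of t vanishes
  have hzero := sum_t_zero (2*m+1)
  -- combine
  have hsum : γ * ((2*m+1 : ℝ) * ((2*m).choose m))
      ≤ ∑ x : Fin (2*m+1) → Bool, (2*(hw x : ℝ) - (2*m+1)) * q x := by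
    calc γ * ((2*m+1 : ℝ) * ((2*m).choose m))
        ≤ γ * ∑ x : Fin (2*m+1) → Bool, |2*(hw x : ℝ) - (2*m+1)| :=
          mul_le_mul_of_nonneg_left habs (le_of_lt hγ)
      _ = ∑ x : Fin (2*m+1) → Bool,
            ((2*(hw x : ℝ) - (2*m+1))/2 + γ * |2*(hw x : ℝ) - (2*m+1)|) := by
          rw [Finset.sum_add_distrib, ← Finset.sum_div, Finset.mul_sum]
          push_cast at hzero
          rw [hzero]
          ring
      _ ≤ _ := Finset.sum_le_sum (fun x _ => per x)
  -- final arithmetic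
  have hfact : ∑ x : Fin (2*m+1) → Bool, (2*(hw x : ℝ) - (2*m+1)) * ((1:ℝ)/2)^(2*m) * q x
      = ((1:ℝ)/2)^(2*m) * ∑ x : Fin (2*m+1) → Bool, (2*(hw x : ℝ) - (2*m+1)) * q x := by
    rw [Finset.mul_sum]
    exact Finset.sum_congr rfl fun x _ => by ring
  rw [show (2*m+1-1) = 2*m from rfl] at *
  rw [hfact]
  have hpow : (0:ℝ) < ((1:ℝ)/2)^(2*m) := by positivity
  have hCpos : (0:ℝ) ≤ ((2*m).choose m : ℝ) := Nat.cast_nonneg _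
  have h1 : ((1:ℝ)/2)^(2*m) * (γ * ((2*m+1 : ℝ) * ((2*m).choose m)))
      ≤ ((1:ℝ)/2)^(2*m) * ∑ x : Fin (2*m+1) → Bool, (2*(hw x : ℝ) - (2*m+1)) * q x :=
    mul_le_mul_of_nonneg_left hsum (le_of_lt hpow)
  refine le_trans ?_ h1
  have hexp : ((1:ℝ)/2)^(2*m) = 2 / 2^(2*m+1) := by
    rw [div_pow, one_pow, pow_succ]
    field_simp
  rw [hexp]
  push_cast
  have h2p : (0:ℝ) < (2:ℝ)^(2*m+1) := by positivity
  rw [div_mul_eq_mul_div, div_mul_eq_mul_div, div_le_div_iff₀ h2p h2p]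
  nlinarith [mul_nonneg (mul_nonneg (le_of_lt hγ) hCpos) (le_of_lt h2p),
    mul_pos hγ h2p, hCpos, h2p]
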